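/- arXiv:1310.8124 — 12 statements merged into one kernel-verified Lean document; each statement's English description precedes it below -/
import Mathlib

section
/- If X is a solution of the matrix equation X = A·Xᵀ·B + C, then X is also a solution of the Stein equation X = (A·Bᵀ)·X·(Aᵀ·B) + (C + A·Cᵀ·B). -/
theorem stmt_0 {m : ℕ} (A B C X : Matrix (Fin m) (Fin m) ℂ)
    (hX : X = A * X.transpose * B + C) :
    X = (A * B.transpose) * X * (A.transpose * B) + (C + A * C.transpose * B) := by
  have hT := congrArg Matrix.transpose hX
  simp only [Matrix.transpose_add, Matrix.transpose_mul, Matrix.transpose_transpose] at hT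
  nth_rewrite 1 [hX]
  rw [hT]
  noncomm_ring
end

section
/- If 𝒳 is a solution of the Stein equation 𝒳 = (A·Bᵀ)·𝒳·(Aᵀ·B) + (C + A·Cᵀ·B), then X := (1/2)(𝒳 + A·𝒳ᵀ·B + C) is a solution of the equation X = A·Xᵀ·B + C. -/
theorem stmt_1 {m : ℕ} (A B C 𝒳 : Matrix (Fin m) (Fin m) ℂ)
    (h𝒳 : 𝒳 = (A * B.transpose) * 𝒳 * (A.transpose * B) + (C + A * C.transpose * B)) :
    ((2 : ℂ)⁻¹ • (𝒳 + A * 𝒳.transpose * B + C)) =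
      A * ((2 : ℂ)⁻¹ • (𝒳 + A * 𝒳.transpose * B + C)).transpose * B + C := by
  have h : A * B.transpose * 𝒳 * (A.transpose * B) = 𝒳 - C - A * C.transpose * B := by
    nth_rewrite 2 [h𝒳]; abel
  simp only [Matrix.transpose_smul, Matrix.transpose_add, Matrix.transpose_mul,
    Matrix.transpose_transpose, Matrix.mul_smul, Matrix.smul_mul, Matrix.mul_add,
    Matrix.add_mul, smul_add]
  rw [show A * (B.transpose * (𝒳 * A.transpose)) * B = A * B.transpose * 𝒳 * (A.transpose * B) by
    noncomm_ring, h]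
  simp only [smul_sub]
  module
end

section
/- If 𝒳 is a solution of the Stein equation 𝒳 = (A·Ā)·𝒳·(B̄·B) + (C + A·C̄·B), then X := (1/2)(𝒳 + A·𝒳̄·B + C) satisfies X = A·X̄·B + C. -/
theorem stmt_3 {m : ℕ} (A B C 𝒳 : Matrix (Fin m) (Fin m) ℂ)
    (h𝒳 : 𝒳 = (A * A.map (starRingEnd ℂ)) * 𝒳 * (B.map (starRingEnd ℂ) * B)
        + (C + A * C.map (starRingEnd ℂ) * B)) :
    ((2 : ℂ)⁻¹ • (𝒳 + A * (𝒳.map (starRingEnd ℂ)) * B + C)) =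
      A * ((2 : ℂ)⁻¹ • (𝒳 + A * (𝒳.map (starRingEnd ℂ)) * B + C)).map (starRingEnd ℂ) * B
        + C := by
  have e1 : ((2 : ℂ)⁻¹ • (𝒳 + A * (𝒳.map (starRingEnd ℂ)) * B + C)).map (starRingEnd ℂ)
      = (2 : ℂ)⁻¹ • (𝒳.map (starRingEnd ℂ)
          + A.map (starRingEnd ℂ) * 𝒳 * B.map (starRingEnd ℂ) + C.map (starRingEnd ℂ)) := by
    ext i j
    simp [Matrix.mul_apply, Matrix.map_apply, Finset.mul_sum, Finset.sum_mul, mul_add, add_mul]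
    norm_num [map_ofNat]
  rw [e1]
  rw [Matrix.mul_smul, Matrix.smul_mul]
  nth_rewrite 1 [h𝒳]
  simp only [smul_add, mul_add, add_mul, mul_assoc]
  module
end

section
/- Let f : 𝓜 → 𝓜 be a ℂ-linear map on m×m complex matrices satisfying f(XY) = f(X)f(Y) for all X, Y, and suppose fⁿ = id for a positive integer n. Define 𝒜 = A·f(A)·f²(A)⋯fⁿ⁻¹(A), ℬ = fⁿ⁻¹(B)·fⁿ⁻²(B)⋯f(B)·B, and Gᵢ(X) = (A·f(A)⋯fⁱ⁻¹(A))·fⁱ(X)·(fⁱ⁻¹(B)⋯f(B)·B). Then any solution X of X = A·f(X)·B + C satisfies the Stein equation X = 𝒜·X·ℬ + Σ_{i=0}^{n-1} Gᵢ(C). -/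
open Finset

/-- Ordered product `A · f(A) · f²(A) ⋯ f^{i-1}(A)`. -/
noncomputable def prodA {m : ℕ} (f : Matrix (Fin m) (Fin m) ℂ → Matrix (Fin m) (Fin m) ℂ)
    (A : Matrix (Fin m) (Fin m) ℂ) : ℕ → Matrix (Fin m) (Fin m) ℂ
  | 0 => 1
  | i + 1 => prodA f A i * f^[i] A

/-- Ordered product `f^{i-1}(B) ⋯ f(B) · B`. -/
noncomputable def prodB {m : ℕ} (f : Matrix (Fin m) (Fin m) ℂ → Matrix (Fin m) (Fin m) ℂ)
    (B : Matrix (Fin m) (Fin m) ℂ) : ℕ → Matrix (Fin m) (Fin m) ℂ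
  | 0 => 1
  | i + 1 => f^[i] B * prodB f B i

/-- `Gᵢ(X) = (A·f(A)⋯f^{i-1}(A)) · fⁱ(X) · (f^{i-1}(B)⋯f(B)·B)`. -/
noncomputable def G {m : ℕ} (f : Matrix (Fin m) (Fin m) ℂ → Matrix (Fin m) (Fin m) ℂ)
    (A B : Matrix (Fin m) (Fin m) ℂ) (i : ℕ) (X : Matrix (Fin m) (Fin m) ℂ) :
    Matrix (Fin m) (Fin m) ℂ :=
  prodA f A i * f^[i] X * prodB f B i

/-- The averaging operator `F(𝒳) = (1/n)·Σ_{i<n} (Gᵢ(𝒳) + (n−i−1)·Gᵢ(C))`. -/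
noncomputable def Fop {m : ℕ} (f : Matrix (Fin m) (Fin m) ℂ → Matrix (Fin m) (Fin m) ℂ)
    (A B C : Matrix (Fin m) (Fin m) ℂ) (n : ℕ) (𝒳 : Matrix (Fin m) (Fin m) ℂ) :
    Matrix (Fin m) (Fin m) ℂ :=
  ((n : ℂ)⁻¹) • ∑ i ∈ range n, (G f A B i 𝒳 + ((n - i - 1 : ℕ) : ℂ) • G f A B i C)

theorem stmt_4 {m n : ℕ} (hn : 0 < n)
    (f : Matrix (Fin m) (Fin m) ℂ → Matrix (Fin m) (Fin m) ℂ)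
    (hlin : IsLinearMap ℂ f) (hmul : ∀ X Y, f (X * Y) = f X * f Y)
    (hper : f^[n] = id)
    (A B C X : Matrix (Fin m) (Fin m) ℂ)
    (hX : X = A * f X * B + C) :
    X = prodA f A n * X * prodB f B n + ∑ i ∈ range n, G f A B i C := by
  have hitadd : ∀ k (Y Z : Matrix (Fin m) (Fin m) ℂ),
      f^[k] (Y + Z) = f^[k] Y + f^[k] Z := by
    intro k
    induction k with
    | zero => intro Y Z; simp
    | succ k ih =>
      intro Y Z
      simp [Function.iterate_succ_apply', ih, hlin.map_add]
  have hitmul : ∀ k (Y Z : Matrix (Fin m) (Fin m) ℂ),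
      f^[k] (Y * Z) = f^[k] Y * f^[k] Z := by
    intro k
    induction k with
    | zero => intro Y Z; simp
    | succ k ih =>
      intro Y Z
      simp [Function.iterate_succ_apply', ih, hmul]
  have key : ∀ k, X = prodA f A k * f^[k] X * prodB f B k + ∑ i ∈ range k, G f A B i C := by
    intro k
    induction k with
    | zero => simp [prodA, prodB]
    | succ k ih =>
      have hk : f^[k] X = f^[k] A * f^[k+1] X * f^[k] B + f^[k] C := by
        conv_lhs => rw [hX]
        rw [hitadd, hitmul, hitmul, Function.iterate_succ_apply]
      have : prodA f A (k+1) * f^[k+1] X * prodB f B (k+1) + ∑ i ∈ range (k+1), G f A B i C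
          = prodA f A k * f^[k] X * prodB f B k + ∑ i ∈ range k, G f A B i C := by
        rw [hk, Finset.sum_range_succ]
        simp only [prodA, prodB, G]
        noncomm_ring
      rw [this]
      exact ih
  have := key n
  rwa [hper, id_eq] at this
end

section
/- Let f be a multiplicative ℂ-linear map on m×m complex matrices with fⁿ = id, and define Gᵢ as the i-fold composition of the map X ↦ A·f(X)·B with C replaced by zero, i.e., Gᵢ(X) = (A·f(A)⋯fⁱ⁻¹(A))·fⁱ(X)·(fⁱ⁻¹(B)⋯f(B)·B). If 𝒳 satisfies the Stein equation 𝒳 = Gₙ(𝒳) + Σ_{i=0}^{n-1} Gᵢ(C), then F(𝒳) := (1/n)·Σ_{i=0}^{n-1} (Gᵢ(𝒳) + (n−i−1)·Gᵢ(C)) satisfies F(𝒳) = A·f(F(𝒳))·B + C. -/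
open Finset

theorem stmt_5 {m n : ℕ} (hn : 0 < n)
    (f : Matrix (Fin m) (Fin m) ℂ → Matrix (Fin m) (Fin m) ℂ)
    (hlin : IsLinearMap ℂ f) (hmul : ∀ X Y, f (X * Y) = f X * f Y)
    (hper : f^[n] = id)
    (A B C 𝒳 : Matrix (Fin m) (Fin m) ℂ)
    (h𝒳 : 𝒳 = G f A B n 𝒳 + ∑ i ∈ range n, G f A B i C) :
    Fop f A B C n 𝒳 = A * f (Fop f A B C n 𝒳) * B + C := by
  have hn' : (n : ℂ) ≠ 0 := Nat.cast_ne_zero.mpr hn.ne'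
  -- f 1 = 1
  have hone : f 1 = 1 := by
    have hY : f (f^[n-1] (1 : Matrix (Fin m) (Fin m) ℂ)) = 1 := by
      have hn1 : (n - 1).succ = n := by omega
      rw [← Function.iterate_succ_apply' f (n-1), hn1, hper]; rfl
    calc f 1 = f (f^[n-1] 1) * f 1 := by rw [hY, one_mul]
      _ = f (f^[n-1] 1 * 1) := (hmul _ _).symm
      _ = 1 := by rw [mul_one, hY]
  have hA : ∀ i, A * f (prodA f A i) = prodA f A (i + 1) := by
    intro i; induction i with
    | zero => simp [prodA, hone]
    | succ k ih =>
      show A * f (prodA f A k * f^[k] A) = prodA f A (k+1) * f^[k+1] A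
      rw [hmul, ← mul_assoc, ih, Function.iterate_succ_apply']
  have hB : ∀ i, f (prodB f B i) * B = prodB f B (i + 1) := by
    intro i; induction i with
    | zero => simp [prodB, hone]
    | succ k ih =>
      show f (f^[k] B * prodB f B k) * B = f^[k+1] B * prodB f B (k+1)
      rw [hmul, mul_assoc, ih, Function.iterate_succ_apply']
  have hG : ∀ i X, A * f (G f A B i X) * B = G f A B (i+1) X := by
    intro i X
    show A * f (prodA f A i * f^[i] X * prodB f B i) * B
        = prodA f A (i+1) * f^[i+1] X * prodB f B (i+1)
    rw [hmul, hmul, Function.iterate_succ_apply' f i X, ← hA, ← hB]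
    simp only [mul_assoc]
  set g := G f A B with hg
  have hterm : ∀ i, A * f (g i 𝒳 + ((n - i - 1 : ℕ) : ℂ) • g i C) * B
      = g (i+1) 𝒳 + ((n - i - 1 : ℕ) : ℂ) • g (i+1) C := by
    intro i
    rw [hlin.map_add, hlin.map_smul, mul_add, add_mul, mul_smul_comm, smul_mul_assoc,
      hG, hG]
  have key : A * f (Fop f A B C n 𝒳) * B
      = (n : ℂ)⁻¹ • ∑ i ∈ range n, (g (i+1) 𝒳 + ((n - i - 1 : ℕ) : ℂ) • g (i+1) C) := by
    rw [Fop, hlin.map_smul, mul_smul_comm, smul_mul_assoc]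
    congr 1
    rw [show f (∑ i ∈ range n, (g i 𝒳 + ((n - i - 1 : ℕ) : ℂ) • g i C))
        = ∑ i ∈ range n, f (g i 𝒳 + ((n - i - 1 : ℕ) : ℂ) • g i C) from
      map_sum (hlin.mk' f) _ _, Finset.mul_sum, Finset.sum_mul]
    exact Finset.sum_congr rfl fun i _ => hterm i
  have shift : ∀ a : ℕ → Matrix (Fin m) (Fin m) ℂ,
      ∑ i ∈ range n, a (i+1) = ∑ i ∈ range n, a i + a n - a 0 := by
    intro a
    have h := (Finset.sum_range_succ' a n).symm.trans (Finset.sum_range_succ a n)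
    exact eq_sub_of_add_eq h
  have hg0 : ∀ X, g 0 X = X := by intro X; simp [hg, G, prodA, prodB]
  -- the main sum identity
  have hsum : ∑ i ∈ range n, (g (i+1) 𝒳 + ((n - i - 1 : ℕ) : ℂ) • g (i+1) C)
      + (n : ℂ) • C
      = ∑ i ∈ range n, (g i 𝒳 + ((n - i - 1 : ℕ) : ℂ) • g i C) := by
    rw [Finset.sum_add_distrib, Finset.sum_add_distrib]
    have e1 : ∑ i ∈ range n, g (i+1) 𝒳 = ∑ i ∈ range n, g i 𝒳 - ∑ i ∈ range n, g i C := by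
      have hgn : g n 𝒳 = 𝒳 - ∑ i ∈ range n, g i C := eq_sub_of_add_eq h𝒳.symm
      rw [shift (fun i => g i 𝒳), hg0, hgn]; abel
    have e2 : ∑ i ∈ range n, ((n - i - 1 : ℕ) : ℂ) • g (i+1) C
        = (∑ i ∈ range n, ((n - i - 1 : ℕ) : ℂ) • g i C + ∑ i ∈ range n, g i C)
          - (n : ℂ) • C := by
      have r1 : ∑ i ∈ range n, ((n - i - 1 : ℕ) : ℂ) • g (i+1) C
          = ∑ i ∈ range n, ((n - (i+1) : ℕ) : ℂ) • g (i+1) C := by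
        exact Finset.sum_congr rfl fun i _ => by rw [Nat.sub_sub]
      rw [r1, shift (fun i => ((n - i : ℕ) : ℂ) • g i C)]
      have r2 : ∑ i ∈ range n, ((n - i : ℕ) : ℂ) • g i C
          = ∑ i ∈ range n, (((n - i - 1 : ℕ) : ℂ) • g i C + g i C) := by
        refine Finset.sum_congr rfl fun i hi => ?_
        have hi' := Finset.mem_range.mp hi
        have : ((n - i : ℕ) : ℂ) = ((n - i - 1 : ℕ) : ℂ) + 1 := by
          have : n - i - 1 + 1 = n - i := by omega
          rw [← this]; push_cast; ring
        rw [this, add_smul, one_smul]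
      rw [r2, Finset.sum_add_distrib, Nat.sub_self, hg0]
      simp
    rw [e1, e2]; abel
  rw [key, Fop, show (G f A B) = g from hg.symm, ← hsum, smul_add, smul_smul,
    inv_mul_cancel₀ hn', one_smul]
end

section
/- Let f be a multiplicative ℂ-linear map on m×m complex matrices with fⁿ = id, Gᵢ(X) = (A·f(A)⋯fⁱ⁻¹(A))·fⁱ(X)·(fⁱ⁻¹(B)⋯f(B)·B), and F(𝒳) = (1/n)·Σ_{i=0}^{n-1} (Gᵢ(𝒳) + (n−i−1)·Gᵢ(C)). If X solves X = A·f(X)·B + C, then F(X) = X. -/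
open Finset

theorem stmt_6 {m n : ℕ} (hn : 0 < n)
    (f : Matrix (Fin m) (Fin m) ℂ → Matrix (Fin m) (Fin m) ℂ)
    (hlin : IsLinearMap ℂ f) (hmul : ∀ X Y, f (X * Y) = f X * f Y)
    (hper : f^[n] = id)
    (A B C X : Matrix (Fin m) (Fin m) ℂ)
    (hX : X = A * f X * B + C) :
    Fop f A B C n X = X := by
  have hadd : ∀ (i : ℕ) (P Q : Matrix (Fin m) (Fin m) ℂ),
      f^[i] (P + Q) = f^[i] P + f^[i] Q := by
    intro i
    induction i with
    | zero => simp
    | succ k ih =>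
      intro P Q
      simp only [Function.iterate_succ_apply', ih, hlin.map_add]
  have hmulit : ∀ (i : ℕ) (P Q : Matrix (Fin m) (Fin m) ℂ),
      f^[i] (P * Q) = f^[i] P * f^[i] Q := by
    intro i
    induction i with
    | zero => simp
    | succ k ih =>
      intro P Q
      simp only [Function.iterate_succ_apply', ih, hmul]
  have hstep : ∀ i, G f A B i X = G f A B (i+1) X + G f A B i C := by
    intro i
    have h1 : f^[i] X = f^[i] A * f^[i+1] X * f^[i] B + f^[i] C := by
      conv_lhs => rw [hX]
      rw [hadd, hmulit, hmulit, Function.iterate_succ_apply]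
    simp only [G, h1, prodA, prodB]
    noncomm_ring
  have hG : ∀ i, G f A B i X = X - ∑ j ∈ range i, G f A B j C := by
    intro i
    induction i with
    | zero => simp [G, prodA, prodB]
    | succ k ih =>
      have h2 : G f A B (k+1) X = G f A B k X - G f A B k C := by
        rw [hstep k]; abel
      rw [h2, ih, Finset.sum_range_succ]
      abel
  have hsum : ∀ N : ℕ, ∑ i ∈ range N, ∑ j ∈ range i, G f A B j C
      = ∑ i ∈ range N, (N - i - 1) • G f A B i C := by
    intro N
    induction N with
    | zero => simp
    | succ k ih =>
      rw [Finset.sum_range_succ, ih, Finset.sum_range_succ (n := k)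
        (f := fun i => (k + 1 - i - 1) • G f A B i C)]
      have hlast : (k + 1 - k - 1) • G f A B k C = 0 := by simp
      rw [hlast, add_zero, ← Finset.sum_add_distrib]
      apply Finset.sum_congr rfl
      intro i hi
      rw [Finset.mem_range] at hi
      have : k + 1 - i - 1 = (k - i - 1) + 1 := by omega
      rw [this, succ_nsmul]
  have key : ∑ i ∈ range n, (G f A B i X + ((n - i - 1 : ℕ) : ℂ) • G f A B i C)
      = n • X := by
    calc ∑ i ∈ range n, (G f A B i X + ((n - i - 1 : ℕ) : ℂ) • G f A B i C)
        = ∑ i ∈ range n, ((X - ∑ j ∈ range i, G f A B j C) + (n - i - 1) • G f A B i C) := by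
          apply Finset.sum_congr rfl
          intro i _
          rw [hG i, Nat.cast_smul_eq_nsmul]
      _ = ∑ i ∈ range n, X - ∑ i ∈ range n, (∑ j ∈ range i, G f A B j C)
            + ∑ i ∈ range n, (n - i - 1) • G f A B i C := by
          rw [Finset.sum_add_distrib, Finset.sum_sub_distrib]
      _ = n • X := by
          rw [hsum, Finset.sum_const, Finset.card_range]
          abel
  rw [Fop, key]
  rw [← Nat.cast_smul_eq_nsmul ℂ, smul_smul, inv_mul_cancel₀ (by exact_mod_cast hn.ne'), one_smul]
end

section
/- Let f be a multiplicative ℂ-linear map on m×m complex matrices with fⁿ = id, Gᵢ(X) = (A·f(A)⋯fⁱ⁻¹(A))·fⁱ(X)·(fⁱ⁻¹(B)⋯f(B)·B), and F(𝒳) = (1/n)·Σ_{i=0}^{n-1} (Gᵢ(𝒳) + (n−i−1)·Gᵢ(C)). If 𝒳 solves the Stein equation 𝒳 = Gₙ(𝒳) + Σ_{i=0}^{n-1} Gᵢ(C), then F(F(𝒳)) = F(𝒳), i.e., F(𝒳) is a fixed point of F. -/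
open Finset

section Aux

variable {m : ℕ} {f : Matrix (Fin m) (Fin m) ℂ → Matrix (Fin m) (Fin m) ℂ}
  {A B : Matrix (Fin m) (Fin m) ℂ}

lemma iter_mul (hmul : ∀ X Y, f (X * Y) = f X * f Y) (k : ℕ)
    (X Y : Matrix (Fin m) (Fin m) ℂ) : f^[k] (X * Y) = f^[k] X * f^[k] Y := by
  induction k generalizing X Y with
  | zero => simp
  | succ k ih => simp [Function.iterate_succ_apply', ih, hmul]

lemma iter_add (hlin : IsLinearMap ℂ f) (k : ℕ)
    (X Y : Matrix (Fin m) (Fin m) ℂ) : f^[k] (X + Y) = f^[k] X + f^[k] Y := by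
  induction k generalizing X Y with
  | zero => simp
  | succ k ih => simp [Function.iterate_succ_apply', ih, hlin.map_add]

lemma iter_smul (hlin : IsLinearMap ℂ f) (k : ℕ) (c : ℂ)
    (X : Matrix (Fin m) (Fin m) ℂ) : f^[k] (c • X) = c • f^[k] X := by
  induction k generalizing X with
  | zero => simp
  | succ k ih => simp [Function.iterate_succ_apply', ih, hlin.map_smul]

lemma f_one {n : ℕ} (hn : 0 < n) (hper : f^[n] = id)
    (hmul : ∀ X Y, f (X * Y) = f X * f Y) : f (1 : Matrix (Fin m) (Fin m) ℂ) = 1 := by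
  have hsurj : Function.Surjective f := by
    intro y
    refine ⟨f^[n - 1] y, ?_⟩
    rw [← Function.iterate_succ_apply' f (n - 1) y, Nat.succ_eq_add_one, Nat.sub_add_cancel hn, hper]
    rfl
  obtain ⟨z, hz⟩ := hsurj 1
  calc f 1 = f 1 * f z := by rw [hz, mul_one]
    _ = f (1 * z) := (hmul 1 z).symm
    _ = 1 := by rw [one_mul, hz]

lemma iter_one (hone : f (1 : Matrix (Fin m) (Fin m) ℂ) = 1) (k : ℕ) :
    f^[k] (1 : Matrix (Fin m) (Fin m) ℂ) = 1 := by
  induction k with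
  | zero => simp
  | succ k ih => simp [Function.iterate_succ_apply', ih, hone]

lemma prodA_add (hone : f (1 : Matrix (Fin m) (Fin m) ℂ) = 1)
    (hmul : ∀ X Y, f (X * Y) = f X * f Y) (i j : ℕ) :
    prodA f A (i + j) = prodA f A i * f^[i] (prodA f A j) := by
  induction j with
  | zero => simp [prodA, iter_one hone]
  | succ j ih =>
    show prodA f A ((i + j) + 1) = _
    rw [prodA, ih, prodA, iter_mul hmul, ← Function.iterate_add_apply, mul_assoc]

lemma prodB_add (hone : f (1 : Matrix (Fin m) (Fin m) ℂ) = 1)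
    (hmul : ∀ X Y, f (X * Y) = f X * f Y) (i j : ℕ) :
    prodB f B (i + j) = f^[i] (prodB f B j) * prodB f B i := by
  induction j with
  | zero => simp [prodB, iter_one hone]
  | succ j ih =>
    show prodB f B ((i + j) + 1) = _
    rw [prodB, ih, prodB, iter_mul hmul, ← Function.iterate_add_apply, mul_assoc]

lemma G_comp (hone : f (1 : Matrix (Fin m) (Fin m) ℂ) = 1)
    (hmul : ∀ X Y, f (X * Y) = f X * f Y) (i j : ℕ) (X : Matrix (Fin m) (Fin m) ℂ) :
    G f A B i (G f A B j X) = G f A B (i + j) X := by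
  unfold G
  rw [iter_mul hmul, iter_mul hmul, prodA_add hone hmul, prodB_add hone hmul,
    ← Function.iterate_add_apply]
  simp only [mul_assoc]

lemma G_zero (i : ℕ) (hlin : IsLinearMap ℂ f) :
    G f A B i (0 : Matrix (Fin m) (Fin m) ℂ) = 0 := by
  have : f^[i] (0 : Matrix (Fin m) (Fin m) ℂ) = 0 := by
    have := iter_smul hlin i 0 0
    simpa using this
  simp [G, this]

lemma G_add (hlin : IsLinearMap ℂ f) (i : ℕ) (X Y : Matrix (Fin m) (Fin m) ℂ) :
    G f A B i (X + Y) = G f A B i X + G f A B i Y := by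
  simp [G, iter_add hlin, mul_add, add_mul]

lemma G_smul (hlin : IsLinearMap ℂ f) (i : ℕ) (c : ℂ) (X : Matrix (Fin m) (Fin m) ℂ) :
    G f A B i (c • X) = c • G f A B i X := by
  simp [G, iter_smul hlin, Matrix.mul_smul, Matrix.smul_mul]

lemma G_sum (hlin : IsLinearMap ℂ f) (i : ℕ) {ι : Type*} (s : Finset ι)
    (g : ι → Matrix (Fin m) (Fin m) ℂ) :
    G f A B i (∑ x ∈ s, g x) = ∑ x ∈ s, G f A B i (g x) := by
  induction s using Finset.cons_induction with
  | empty => simp [G_zero i hlin]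
  | cons a s ha ih => rw [Finset.sum_cons, Finset.sum_cons, G_add hlin, ih]

lemma G_zero_idx (X : Matrix (Fin m) (Fin m) ℂ) : G f A B 0 X = X := by
  simp [G, prodA, prodB]

/-- shifted-sum identity in an additive group -/
lemma sum_shift {M : Type*} [AddCommGroup M] (n : ℕ) (g : ℕ → M) :
    ∑ i ∈ range n, g (i + 1) = ∑ i ∈ range n, g i + g n - g 0 := by
  have h1 := Finset.sum_range_succ' g n
  have h2 := Finset.sum_range_succ g n
  have h3 : (∑ i ∈ range n, g (i + 1)) + g 0 = ∑ i ∈ range n, g i + g n := h1.symm.trans h2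
  exact eq_sub_of_add_eq h3

/-- double-sum identity -/
lemma double_sum {M : Type*} [AddCommGroup M] [Module ℂ M] (g : ℕ → M) (N : ℕ) :
    ∑ i ∈ range N, ∑ j ∈ range i, g j = ∑ i ∈ range N, ((N - i - 1 : ℕ) : ℂ) • g i := by
  induction N with
  | zero => simp
  | succ N ih =>
    rw [Finset.sum_range_succ, ih, Finset.sum_range_succ]
    have : ((N + 1 - N - 1 : ℕ) : ℂ) • g N = 0 := by simp
    rw [this, add_zero, ← Finset.sum_add_distrib]
    apply Finset.sum_congr rfl
    intro i hi
    have hi' : i < N := Finset.mem_range.mp hi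
    have hcoef : (N - i - 1) + 1 = N + 1 - i - 1 := by omega
    rw [← hcoef]
    push_cast
    rw [add_smul, one_smul]

end Aux

theorem stmt_7 {m n : ℕ} (hn : 0 < n)
    (f : Matrix (Fin m) (Fin m) ℂ → Matrix (Fin m) (Fin m) ℂ)
    (hlin : IsLinearMap ℂ f) (hmul : ∀ X Y, f (X * Y) = f X * f Y)
    (hper : f^[n] = id)
    (A B C 𝒳 : Matrix (Fin m) (Fin m) ℂ)
    (h𝒳 : 𝒳 = G f A B n 𝒳 + ∑ i ∈ range n, G f A B i C) :
    Fop f A B C n (Fop f A B C n 𝒳) = Fop f A B C n 𝒳 := by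
  have hone : f (1 : Matrix (Fin m) (Fin m) ℂ) = 1 := f_one hn hper hmul
  have hnC : (n : ℂ) ≠ 0 := Nat.cast_ne_zero.mpr hn.ne'
  set Y := Fop f A B C n 𝒳 with hY
  set S := ∑ i ∈ range n, G f A B i C with hS
  -- Step 1: Y = G 1 Y + C
  have step1 : Y = G f A B 1 Y + C := by
    have hGn : G f A B n 𝒳 = 𝒳 - S := eq_sub_of_add_eq h𝒳.symm
    have hG1Y : G f A B 1 Y =
        (n : ℂ)⁻¹ • ∑ i ∈ range n,
          (G f A B (1 + i) 𝒳 + ((n - i - 1 : ℕ) : ℂ) • G f A B (1 + i) C) := by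
      rw [hY, Fop, G_smul hlin, G_sum hlin]
      congr 1
      apply Finset.sum_congr rfl
      intro i _
      rw [G_add hlin, G_smul hlin, G_comp hone hmul, G_comp hone hmul]
    have key : (∑ i ∈ range n,
          (G f A B (1 + i) 𝒳 + ((n - i - 1 : ℕ) : ℂ) • G f A B (1 + i) C)) + (n : ℂ) • C
        = ∑ i ∈ range n, (G f A B i 𝒳 + ((n - i - 1 : ℕ) : ℂ) • G f A B i C) := by
      have e1 : ∑ i ∈ range n, G f A B (1 + i) 𝒳
          = ∑ i ∈ range n, G f A B i 𝒳 + G f A B n 𝒳 - G f A B 0 𝒳 := by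
        have := sum_shift n (fun i => G f A B i 𝒳)
        simpa [add_comm] using this
      have e2 : ∑ i ∈ range n, ((n - i - 1 : ℕ) : ℂ) • G f A B (1 + i) C
          = (∑ i ∈ range n, ((n - i : ℕ) : ℂ) • G f A B i C) + ((n - n : ℕ) : ℂ) • G f A B n C
            - ((n - 0 : ℕ) : ℂ) • G f A B 0 C := by
        have := sum_shift n (fun i => ((n - i : ℕ) : ℂ) • G f A B i C)
        have hc : ∀ i, ((n - (i + 1) : ℕ) : ℂ) • G f A B (i + 1) C
            = ((n - i - 1 : ℕ) : ℂ) • G f A B (1 + i) C := by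
          intro i
          rw [Nat.sub_sub, add_comm 1 i]
        calc ∑ i ∈ range n, ((n - i - 1 : ℕ) : ℂ) • G f A B (1 + i) C
            = ∑ i ∈ range n, ((n - (i + 1) : ℕ) : ℂ) • G f A B (i + 1) C := by
              exact Finset.sum_congr rfl fun i _ => (hc i).symm
          _ = _ := this
      have e3 : ∑ i ∈ range n, ((n - i : ℕ) : ℂ) • G f A B i C
          = ∑ i ∈ range n, ((n - i - 1 : ℕ) : ℂ) • G f A B i C + S := by
        rw [hS, ← Finset.sum_add_distrib]
        apply Finset.sum_congr rfl
        intro i hi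
        have hi' : i < n := Finset.mem_range.mp hi
        have : (n - i : ℕ) = (n - i - 1) + 1 := by omega
        rw [this]
        push_cast
        rw [add_smul, one_smul]
      rw [Finset.sum_add_distrib, Finset.sum_add_distrib, e1, e2, e3, hGn, G_zero_idx,
        G_zero_idx]
      simp only [Nat.sub_self, Nat.sub_zero, Nat.cast_zero, zero_smul]
      abel
    have : G f A B 1 Y + C = (n : ℂ)⁻¹ • ((∑ i ∈ range n,
          (G f A B (1 + i) 𝒳 + ((n - i - 1 : ℕ) : ℂ) • G f A B (1 + i) C)) + (n : ℂ) • C) := by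
      rw [smul_add, hG1Y, smul_smul, inv_mul_cancel₀ hnC, one_smul]
    rw [this, key, hY, Fop]
  -- Step 2: Y = G k Y + ∑_{i<k} G i C
  have step2 : ∀ k, Y = G f A B k Y + ∑ i ∈ range k, G f A B i C := by
    intro k
    induction k with
    | zero => simp [G_zero_idx]
    | succ k ih =>
      rw [Finset.sum_range_succ]
      calc Y = G f A B k Y + ∑ i ∈ range k, G f A B i C := ih
        _ = G f A B k (G f A B 1 Y + C) + ∑ i ∈ range k, G f A B i C := by rw [← step1]
        _ = G f A B (k + 1) Y + G f A B k C + ∑ i ∈ range k, G f A B i C := by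
            rw [G_add hlin, G_comp hone hmul]
        _ = _ := by abel
  -- Step 3: Fop Y = Y
  have hGiY : ∀ i, G f A B i Y = Y - ∑ j ∈ range i, G f A B j C := by
    intro i
    exact eq_sub_of_add_eq (step2 i).symm
  rw [show Fop f A B C n Y = (n : ℂ)⁻¹ • ∑ i ∈ range n,
      (G f A B i Y + ((n - i - 1 : ℕ) : ℂ) • G f A B i C) from rfl]
  have : ∑ i ∈ range n, (G f A B i Y + ((n - i - 1 : ℕ) : ℂ) • G f A B i C)
      = (n : ℂ) • Y := by
    have := double_sum (fun j => G f A B j C) n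
    calc ∑ i ∈ range n, (G f A B i Y + ((n - i - 1 : ℕ) : ℂ) • G f A B i C)
        = ∑ i ∈ range n, ((Y - ∑ j ∈ range i, G f A B j C)
            + ((n - i - 1 : ℕ) : ℂ) • G f A B i C) := by
          exact Finset.sum_congr rfl fun i _ => by rw [hGiY i]
      _ = (∑ i ∈ range n, Y) - (∑ i ∈ range n, ∑ j ∈ range i, G f A B j C)
            + ∑ i ∈ range n, ((n - i - 1 : ℕ) : ℂ) • G f A B i C := by
          rw [Finset.sum_add_distrib, Finset.sum_sub_distrib]
      _ = (n : ℂ) • Y := by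
          rw [this, Finset.sum_const, Finset.card_range]
          simp [Nat.cast_smul_eq_nsmul]
  rw [this, smul_smul, inv_mul_cancel₀ hnC, one_smul]
end

section
/- Let f be a multiplicative ℂ-linear map on m×m complex matrices with fⁿ = id, and let 𝒜 = A·f(A)⋯fⁿ⁻¹(A), ℬ = fⁿ⁻¹(B)⋯f(B)·B. If for all λ ∈ σ(𝒜) and μ ∈ σ(ℬ) one has λ·μ ≠ 1 (the spectra are reciprocal free), then the equation X = A·f(X)·B + C has exactly one solution. -/
open Finset Polynomial

lemma my_eval_charpoly {m : ℕ} (M : Matrix (Fin m) (Fin m) ℂ) (μ : ℂ) :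
    M.charpoly.eval μ = (Matrix.scalar (Fin m) μ - M).det := by
  rw [Matrix.charpoly, _root_.eval_det, Matrix.matPolyEquiv_charmatrix]
  simp

lemma my_mem_spectrum {m : ℕ} (M : Matrix (Fin m) (Fin m) ℂ) (μ : ℂ) :
    μ ∈ spectrum ℂ M ↔ M.charpoly.eval μ = 0 := by
  rw [spectrum.mem_iff, my_eval_charpoly]
  have halg : algebraMap ℂ (Matrix (Fin m) (Fin m) ℂ) μ = Matrix.scalar (Fin m) μ := rfl
  rw [halg, Matrix.isUnit_iff_isUnit_det, isUnit_iff_ne_zero, not_not]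

/-- Key injectivity: under the reciprocal-free condition, `𝒜 X ℬ = X` forces `X = 0`. -/
lemma my_key {m : ℕ} (𝒜 ℬ : Matrix (Fin m) (Fin m) ℂ)
    (hrf : ∀ lam ∈ spectrum ℂ 𝒜, ∀ mu ∈ spectrum ℂ ℬ, lam * mu ≠ 1)
    (X : Matrix (Fin m) (Fin m) ℂ) (hX : 𝒜 * X * ℬ = X) : X = 0 := by
  rcases Nat.eq_zero_or_pos m with hm | hm
  · subst hm; exact Subsingleton.elim _ _
  have h1 : ∀ k, 𝒜 ^ k * X * ℬ ^ k = X := by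
    intro k; induction k with
    | zero => simp
    | succ k ih =>
      calc 𝒜 ^ (k+1) * X * ℬ ^ (k+1) = 𝒜 * (𝒜 ^ k * X * ℬ ^ k) * ℬ := by
            rw [pow_succ' 𝒜, pow_succ ℬ]; noncomm_ring
        _ = 𝒜 * X * ℬ := by rw [ih]
        _ = X := hX
  set p := ℬ.charpoly with hp
  have hpdeg : p.natDegree = m := by simp [hp]
  set s : Polynomial ℂ := ∑ k ∈ range (m+1), Polynomial.C (p.coeff k) * Polynomial.X ^ (m - k)
    with hsdef
  have hs : (Polynomial.aeval 𝒜 s) * X = 0 := by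
    have e1 : (Polynomial.aeval 𝒜 s) * X
        = ∑ k ∈ range (m+1), p.coeff k • (𝒜 ^ (m-k) * X) := by
      rw [hsdef, map_sum, Finset.sum_mul]
      refine Finset.sum_congr rfl fun k _ => ?_
      simp [Algebra.smul_def, mul_assoc]
    have e2 : ∀ k ∈ range (m+1), 𝒜 ^ (m-k) * X = 𝒜 ^ m * X * ℬ ^ k := by
      intro k hk
      have hk' : k ≤ m := Nat.lt_succ_iff.mp (Finset.mem_range.mp hk)
      calc 𝒜 ^ (m-k) * X = 𝒜 ^ (m-k) * (𝒜 ^ k * X * ℬ ^ k) := by rw [h1 k]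
        _ = 𝒜 ^ m * X * ℬ ^ k := by
            rw [← mul_assoc, ← mul_assoc, ← pow_add, Nat.sub_add_cancel hk']
    rw [e1, Finset.sum_congr rfl fun k hk => by rw [e2 k hk]]
    have e3 : ∑ k ∈ range (m+1), p.coeff k • (𝒜 ^ m * X * ℬ ^ k)
        = 𝒜 ^ m * X * ∑ k ∈ range (m+1), p.coeff k • ℬ ^ k := by
      rw [Finset.mul_sum]
      refine Finset.sum_congr rfl fun k _ => ?_
      rw [Matrix.mul_smul]
    have e4 : ∑ k ∈ range (m+1), p.coeff k • ℬ ^ k = Polynomial.aeval ℬ p := by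
      rw [Polynomial.aeval_eq_sum_range, hpdeg]
    rw [e3, e4, hp, Matrix.aeval_self_charpoly, mul_zero]
  have hsne : ∀ lam ∈ spectrum ℂ 𝒜, s.eval lam ≠ 0 := by
    intro lam hlam
    have heval : s.eval lam = ∑ k ∈ range (m+1), p.coeff k * lam ^ (m-k) := by
      simp [hsdef, Polynomial.eval_finset_sum]
    by_cases hl : lam = 0
    · subst hl
      rw [heval, Finset.sum_eq_single m]
      · have : p.coeff m = 1 := by
          have := (Matrix.charpoly_monic ℬ).coeff_natDegree
          rwa [hpdeg] at this
        simp [this]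
      · intro k hk hkm
        have : k < m := lt_of_le_of_ne (Nat.lt_succ_iff.mp (Finset.mem_range.mp hk)) hkm
        rw [zero_pow (Nat.sub_ne_zero_of_lt this), mul_zero]
      · intro h; exact absurd (Finset.mem_range.mpr (Nat.lt_succ_self m)) h
    · intro hz
      have hfac : s.eval lam = lam ^ m * p.eval lam⁻¹ := by
        rw [heval, Polynomial.eval_eq_sum_range, hpdeg, Finset.mul_sum]
        refine Finset.sum_congr rfl fun k hk => ?_
        have hk' : k ≤ m := Nat.lt_succ_iff.mp (Finset.mem_range.mp hk)
        rw [pow_sub₀ lam hl hk', inv_pow]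
        ring
      have hpe : p.eval lam⁻¹ = 0 := by
        rcases mul_eq_zero.mp (hfac ▸ hz) with h | h
        · exact absurd h (pow_ne_zero m hl)
        · exact h
      have hmem : lam⁻¹ ∈ spectrum ℂ ℬ := (my_mem_spectrum ℬ lam⁻¹).mpr hpe
      exact hrf lam hlam lam⁻¹ hmem (mul_inv_cancel₀ hl)
  have hne : (spectrum ℂ 𝒜).Nonempty := by
    have hdeg : 0 < 𝒜.charpoly.degree := by
      have h1 : 0 < 𝒜.charpoly.natDegree := by simp [hm]
      exact Polynomial.natDegree_pos_iff_degree_pos.mp h1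
    obtain ⟨lam, hlam⟩ := Complex.exists_root hdeg
    exact ⟨lam, (my_mem_spectrum 𝒜 lam).mpr hlam⟩
  have hspec := spectrum.map_polynomial_aeval_of_nonempty 𝒜 s hne
  have hunit : IsUnit (Polynomial.aeval 𝒜 s) := by
    by_contra h
    have h0 : (0:ℂ) ∈ spectrum ℂ (Polynomial.aeval 𝒜 s) := (spectrum.zero_mem_iff (R := ℂ)).mpr h
    rw [hspec] at h0
    obtain ⟨lam, hlam, hev⟩ := h0
    exact hsne lam hlam hev
  obtain ⟨u, hu⟩ := hunit
  calc X = 1 * X := (one_mul X).symm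
    _ = (↑u⁻¹ * ↑u) * X := by rw [u.inv_mul]
    _ = ↑u⁻¹ * ((Polynomial.aeval 𝒜 s) * X) := by rw [mul_assoc, hu]
    _ = 0 := by rw [hs, mul_zero]

theorem stmt_10 {m n : ℕ} (hn : 0 < n)
    (f : Matrix (Fin m) (Fin m) ℂ → Matrix (Fin m) (Fin m) ℂ)
    (hlin : IsLinearMap ℂ f) (hmul : ∀ X Y, f (X * Y) = f X * f Y)
    (hper : f^[n] = id)
    (A B C : Matrix (Fin m) (Fin m) ℂ)
    (hrf : ∀ lam ∈ spectrum ℂ (prodA f A n), ∀ mu ∈ spectrum ℂ (prodB f B n),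
      lam * mu ≠ 1) :
    ∃! X : Matrix (Fin m) (Fin m) ℂ, X = A * f X * B + C := by
  set 𝒜 := prodA f A n with h𝒜
  set ℬ := prodB f B n with hℬ
  set D := ∑ i ∈ range n, G f A B i C with hD
  set T : Matrix (Fin m) (Fin m) ℂ → Matrix (Fin m) (Fin m) ℂ :=
    fun X => A * f X * B + C with hT
  -- iterated maps are additive and multiplicative
  have hadd : ∀ k (X Y : Matrix (Fin m) (Fin m) ℂ), f^[k] (X + Y) = f^[k] X + f^[k] Y := by
    intro k; induction k with
    | zero => simp
    | succ k ih => intro X Y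
                   rw [Function.iterate_succ_apply, Function.iterate_succ_apply,
                     Function.iterate_succ_apply, hlin.map_add, ih]
  have hmulk : ∀ k (X Y : Matrix (Fin m) (Fin m) ℂ), f^[k] (X * Y) = f^[k] X * f^[k] Y := by
    intro k; induction k with
    | zero => simp
    | succ k ih => intro X Y
                   rw [Function.iterate_succ_apply, Function.iterate_succ_apply,
                     Function.iterate_succ_apply, hmul, ih]
  -- key iterate formula
  have hiter : ∀ k (X : Matrix (Fin m) (Fin m) ℂ),
      T^[k] X = prodA f A k * f^[k] X * prodB f B k + ∑ i ∈ range k, G f A B i C := by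
    intro k; induction k with
    | zero => intro X; simp [prodA, prodB]
    | succ k ih =>
      intro X
      rw [Function.iterate_succ_apply, ih (T X)]
      have hfT : f^[k] (T X) = f^[k] A * f^[k+1] X * f^[k] B + f^[k] C := by
        rw [hT]
        dsimp only
        rw [hadd k, hmulk k, hmulk k, ← Function.iterate_succ_apply]
      rw [hfT, Finset.sum_range_succ]
      have : prodA f A k * (f^[k] A * f^[k+1] X * f^[k] B + f^[k] C) * prodB f B k
          = prodA f A (k+1) * f^[k+1] X * prodB f B (k+1) + G f A B k C := by
        rw [prodA, prodB, G]
        noncomm_ring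
      rw [this]
      abel
  have hTn : ∀ X, T^[n] X = 𝒜 * X * ℬ + D := by
    intro X
    rw [hiter n X, hper]
    simp [h𝒜, hℬ, hD]
  -- uniqueness of fixed points of the Stein map
  have hΦuniq : ∀ Y Z : Matrix (Fin m) (Fin m) ℂ,
      Y = 𝒜 * Y * ℬ + D → Z = 𝒜 * Z * ℬ + D → Y = Z := by
    intro Y Z hY hZ
    have h0 : 𝒜 * (Y - Z) * ℬ = Y - Z := by
      calc 𝒜 * (Y - Z) * ℬ = (𝒜 * Y * ℬ + D) - (𝒜 * Z * ℬ + D) := by noncomm_ring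
        _ = Y - Z := by rw [← hY, ← hZ]
    have := my_key 𝒜 ℬ hrf (Y - Z) h0
    exact sub_eq_zero.mp this
  -- existence of a fixed point of the Stein map
  have hexists : ∃ X₀ : Matrix (Fin m) (Fin m) ℂ, X₀ = 𝒜 * X₀ * ℬ + D := by
    let ψ : Matrix (Fin m) (Fin m) ℂ →ₗ[ℂ] Matrix (Fin m) (Fin m) ℂ :=
      { toFun := fun X => X - 𝒜 * X * ℬ
        map_add' := by intro X Y; noncomm_ring
        map_smul' := by
          intro c X
          simp [Matrix.mul_smul, Matrix.smul_mul, smul_sub] }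
    have hinj : Function.Injective ψ := by
      rw [injective_iff_map_eq_zero ψ]  -- may not apply to linear maps directly
      intro X hX
      have : 𝒜 * X * ℬ = X := by
        have : X - 𝒜 * X * ℬ = 0 := hX
        linear_combination (norm := noncomm_ring) -this
      exact my_key 𝒜 ℬ hrf X this
    have hsurj : Function.Surjective ψ := LinearMap.injective_iff_surjective.mp hinj
    obtain ⟨X₀, hX₀⟩ := hsurj D
    refine ⟨X₀, ?_⟩
    have : X₀ - 𝒜 * X₀ * ℬ = D := hX₀
    linear_combination (norm := noncomm_ring) this
  obtain ⟨X₀, hX₀⟩ := hexists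
  -- T X₀ is also a fixed point of the Stein map
  have h2 : T X₀ = 𝒜 * (T X₀) * ℬ + D := by
    have hc : T^[n] (T X₀) = T (T^[n] X₀) := by
      rw [← Function.iterate_succ_apply, Function.iterate_succ_apply']
    have : T (T^[n] X₀) = T X₀ := by rw [hTn X₀, ← hX₀]
    rw [← hTn (T X₀), hc, this]
  have hfix : T X₀ = X₀ := hΦuniq _ _ h2 hX₀
  refine ⟨X₀, hfix.symm, ?_⟩
  intro Y hY
  have hYfix : T Y = Y := hY.symm
  have hYn : T^[n] Y = Y := Function.iterate_fixed hYfix n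
  have : Y = 𝒜 * Y * ℬ + D := by rw [← hTn Y, hYn]
  exact hΦuniq Y X₀ this hX₀
end

section
/- For m×m complex matrices 𝒜, ℬ, 𝒞, if λμ ≠ 1 for all λ ∈ σ(𝒜) and μ ∈ σ(ℬ), then the Stein equation 𝒳 = 𝒜·𝒳·ℬ + 𝒞 has a unique solution. -/
open Polynomial

theorem stmt_11 {m : ℕ} (𝒜 ℬ 𝒞 : Matrix (Fin m) (Fin m) ℂ)
    (hrf : ∀ lam ∈ spectrum ℂ 𝒜, ∀ mu ∈ spectrum ℂ ℬ, lam * mu ≠ 1) :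
    ∃! 𝒳 : Matrix (Fin m) (Fin m) ℂ, 𝒳 = 𝒜 * 𝒳 * ℬ + 𝒞 := by
  classical
  -- each root μ of charpoly ℬ is in spectrum ℂ ℬ
  have hroot : ∀ μ ∈ (Matrix.charpoly ℬ).roots, μ ∈ spectrum ℂ ℬ := by
    intro μ hμ
    have hr : (Matrix.charpoly ℬ).IsRoot μ := isRoot_of_mem_roots hμ
    have hdet : ((Matrix.charpoly ℬ)).eval μ = ((Matrix.charmatrix ℬ).map (eval μ)).det := by
      rw [Matrix.charpoly, ← Polynomial.coe_evalRingHom, RingHom.map_det]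
      rfl
    have hmap : (Matrix.charmatrix ℬ).map (eval μ) = μ • (1 : Matrix (Fin m) (Fin m) ℂ) - ℬ := by
      ext i j
      by_cases h : i = j <;>
        simp [h, Matrix.charmatrix_apply, Matrix.map_apply, Matrix.one_apply,
          Matrix.diagonal_apply, Matrix.smul_apply, Matrix.sub_apply]
    rw [spectrum.mem_iff]
    rw [Matrix.isUnit_iff_isUnit_det]
    rw [Algebra.algebraMap_eq_smul_one, ← hmap, ← hdet]
    simp [hr.eq_zero]
  -- each factor 1 - μ • 𝒜 is a unit
  have hunit : ∀ μ ∈ (Matrix.charpoly ℬ).roots, IsUnit (1 - μ • 𝒜) := by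
    intro μ hμ
    by_contra h
    have hμ0 : μ ≠ 0 := by rintro rfl; simp at h
    have : μ⁻¹ ∈ spectrum ℂ 𝒜 := by
      rw [spectrum.mem_iff, Algebra.algebraMap_eq_smul_one]
      intro hu
      apply h
      have : (1 : Matrix (Fin m) (Fin m) ℂ) - μ • 𝒜 = μ • (μ⁻¹ • 1 - 𝒜) := by
        rw [smul_sub, smul_smul, mul_inv_cancel₀ hμ0, one_smul]
      rw [this]
      have := hu.smul (Units.mk0 μ hμ0)
      simpa [Units.smul_def] using this
    exact hrf _ this _ (hroot μ hμ) (inv_mul_cancel₀ hμ0)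
  -- key injectivity statement
  have key : ∀ 𝒴 : Matrix (Fin m) (Fin m) ℂ, 𝒴 = 𝒜 * 𝒴 * ℬ → 𝒴 = 0 := by
    intro 𝒴 h𝒴
    have main : ∀ s : Multiset ℂ,
        (aeval 𝒜 ((s.map (fun μ => 1 - C μ * X)).prod)) * 𝒴
          = 𝒜 ^ Multiset.card s * 𝒴 * aeval ℬ ((s.map (fun μ => X - C μ)).prod) := by
      intro s
      induction s using Multiset.induction_on with
      | empty => simp
      | cons μ t ih =>
        simp only [Multiset.map_cons, Multiset.prod_cons, map_mul, Multiset.card_cons]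
        have e1 : aeval 𝒜 (1 - C μ * X) = 1 - μ • 𝒜 := by
          simp [Algebra.smul_def]
        have e2 : aeval ℬ (X - C μ) = ℬ - μ • (1 : Matrix (Fin m) (Fin m) ℂ) := by
          simp [Algebra.algebraMap_eq_smul_one]
        rw [e1, e2, mul_assoc, ih]
        have hA : ∀ Z : Matrix (Fin m) (Fin m) ℂ, 𝒜 * (𝒜 ^ Multiset.card t * Z)
            = 𝒜 ^ Multiset.card t * (𝒜 * Z) := by
          intro Z
          rw [← mul_assoc, ← pow_succ', pow_succ, mul_assoc]
        have hk' : 𝒜 ^ Multiset.card t * 𝒴 * aeval ℬ ((t.map (fun μ => X - C μ)).prod)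
            = 𝒜 ^ (Multiset.card t + 1) * 𝒴 *
              (ℬ * aeval ℬ ((t.map (fun μ => X - C μ)).prod)) := by
          conv_lhs => rw [h𝒴]
          simp [pow_succ, mul_assoc]
        rw [sub_mul, one_mul]
        nth_rewrite 1 [hk']
        rw [sub_mul (ℬ) (μ • (1 : Matrix (Fin m) (Fin m) ℂ)), mul_sub]
        congr 1
        simp [smul_mul_assoc, mul_smul_comm, pow_succ', mul_assoc]
    -- apply with roots of charpoly ℬ
    set s : Multiset ℂ := (Matrix.charpoly ℬ).roots with hs
    have hch : ((s.map (fun μ => X - C μ)).prod) = Matrix.charpoly ℬ :=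
      ((IsAlgClosed.splits _).eq_prod_roots_of_monic (Matrix.charpoly_monic ℬ)).symm
    have hzero : (aeval 𝒜 ((s.map (fun μ => 1 - C μ * X)).prod)) * 𝒴 = 0 := by
      rw [main s, hch, Matrix.aeval_self_charpoly, mul_zero]
    have hMu' : ∀ t : Multiset ℂ, (∀ μ ∈ t, IsUnit ((1 : Matrix (Fin m) (Fin m) ℂ) - μ • 𝒜)) →
        IsUnit (aeval 𝒜 ((t.map (fun μ => 1 - C μ * X)).prod)) := by
      intro t
      induction t using Multiset.induction_on with
      | empty => simp
      | cons μ t ih =>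
        intro hmem
        simp only [Multiset.map_cons, Multiset.prod_cons, map_mul]
        have e1 : aeval 𝒜 (1 - C μ * X) = 1 - μ • 𝒜 := by
          simp [Algebra.smul_def]
        rw [e1]
        exact (hmem μ (Multiset.mem_cons_self μ t)).mul
          (ih fun ν hν => hmem ν (Multiset.mem_cons_of_mem hν))
    have hMu : IsUnit (aeval 𝒜 ((s.map (fun μ => 1 - C μ * X)).prod)) := hMu' s hunit
    obtain ⟨u, hu⟩ := hMu
    have h0 : (↑u⁻¹ : Matrix (Fin m) (Fin m) ℂ) *
        ((aeval 𝒜 ((s.map (fun μ => 1 - C μ * X)).prod)) * 𝒴) = 0 := by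
      rw [hzero, mul_zero]
    rwa [← hu, ← mul_assoc, Units.inv_mul, one_mul] at h0
  -- the linear map X ↦ X - 𝒜 X ℬ
  let f : Matrix (Fin m) (Fin m) ℂ →ₗ[ℂ] Matrix (Fin m) (Fin m) ℂ :=
    { toFun := fun Z => Z - 𝒜 * Z * ℬ
      map_add' := by intro a b; simp [mul_add, add_mul]; abel
      map_smul' := by intro c a; simp [Matrix.mul_smul, Matrix.smul_mul, smul_sub] }
  have hinj : Function.Injective f := by
    intro a b hab
    have h1 : (a - b) = 𝒜 * (a - b) * ℬ := by
      have hab' : a - 𝒜 * a * ℬ = b - 𝒜 * b * ℬ := hab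
      rw [mul_sub, sub_mul]
      linear_combination (norm := noncomm_ring) hab'
    have := key _ h1
    rwa [sub_eq_zero] at this
  have hsurj : Function.Surjective f := LinearMap.injective_iff_surjective.mp hinj
  obtain ⟨Xs, hXs⟩ := hsurj 𝒞
  have hXs' : Xs - 𝒜 * Xs * ℬ = 𝒞 := hXs
  refine ⟨Xs, by rw [← hXs']; noncomm_ring, ?_⟩
  intro Y hY
  have h1 : (Y - Xs) = 𝒜 * (Y - Xs) * ℬ := by
    have hXs2 : Xs = 𝒜 * Xs * ℬ + 𝒞 := by rw [← hXs']; noncomm_ring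
    rw [mul_sub, sub_mul]
    calc Y - Xs = (𝒜 * Y * ℬ + 𝒞) - (𝒜 * Xs * ℬ + 𝒞) := by rw [← hY, ← hXs2]
      _ = 𝒜 * Y * ℬ - 𝒜 * Xs * ℬ := by noncomm_ring
  have := key _ h1
  rw [sub_eq_zero] at this
  exact this
end

section
/- For m×m complex matrices 𝒜, ℬ, 𝒞 with ρ(𝒜)·ρ(ℬ) < 1 (product of spectral radii less than 1), the Stein equation 𝒳 = 𝒜·𝒳·ℬ + 𝒞 has a unique solution, given by 𝒳 = Σ_{j=0}^{∞} 𝒜ʲ·𝒞·ℬʲ, and this series converges. -/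
/-- Spectral radius of a complex matrix: supremum of the absolute values of its
eigenvalues. -/
noncomputable def specRad {m : ℕ} (A : Matrix (Fin m) (Fin m) ℂ) : ℝ :=
  sSup ((fun z : ℂ => ‖z‖) '' spectrum ℂ A)

open scoped Topology NNReal ENNReal
open Filter

section Aux

attribute [local instance] Matrix.linftyOpNormedRing Matrix.linftyOpNormedAlgebra

theorem matCompl {m : ℕ} : CompleteSpace (Matrix (Fin m) (Fin m) ℂ) :=
  by infer_instance

attribute [local instance] matCompl

theorem specRad_bound {m : ℕ} (A : Matrix (Fin m) (Fin m) ℂ) :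
    spectralRadius ℂ A ≤ ENNReal.ofReal (specRad A) := by
  rw [spectralRadius]
  refine iSup₂_le fun k hk => ?_
  have hbdd : BddAbove ((fun z : ℂ => ‖z‖) '' spectrum ℂ A) :=
    ((spectrum.isCompact A).image continuous_norm).bddAbove
  have h1 : ‖k‖ ≤ specRad A := le_csSup hbdd ⟨k, hk, rfl⟩
  calc (‖k‖₊ : ℝ≥0∞) = ENNReal.ofReal ‖k‖ := (ofReal_norm k).symm
    _ ≤ ENNReal.ofReal (specRad A) := ENNReal.ofReal_le_ofReal h1

theorem specRad_nonneg {m : ℕ} (A : Matrix (Fin m) (Fin m) ℂ) : 0 ≤ specRad A :=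
  Real.sSup_nonneg fun x hx => by obtain ⟨k, -, rfl⟩ := hx; exact norm_nonneg k

theorem ev_norm_pow_le {m : ℕ} (A : Matrix (Fin m) (Fin m) ℂ) {r : ℝ}
    (h : spectralRadius ℂ A < ENNReal.ofReal r) :
    ∀ᶠ n : ℕ in atTop, ‖A ^ n‖ ≤ r ^ n := by
  have ht := spectrum.pow_nnnorm_pow_one_div_tendsto_nhds_spectralRadius A
  filter_upwards [ht.eventually_lt_const h, eventually_ge_atTop 1] with n hn hn1
  have hne : (1 / (n : ℝ)) ≠ 0 := by positivity
  have h2 : ((‖A ^ n‖₊ : ℝ≥0∞) ^ (1 / (n : ℝ))) ^ (n : ℝ) ≤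
      (ENNReal.ofReal r) ^ (n : ℝ) :=
    ENNReal.rpow_le_rpow hn.le (by positivity)
  rw [← ENNReal.rpow_mul, one_div, inv_mul_cancel₀ (by positivity : (n:ℝ) ≠ 0),
    ENNReal.rpow_one] at h2
  have hr0 : 0 ≤ r := by
    by_contra hr
    simp [ENNReal.ofReal_eq_zero.mpr (not_le.mp hr).le] at h
  rw [ENNReal.rpow_natCast, ← ENNReal.ofReal_pow hr0] at h2
  exact (ENNReal.ofReal_le_ofReal_iff (by positivity)).mp ((ofReal_norm (A ^ n)).trans_le h2)

end Aux

section Main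

attribute [local instance] Matrix.linftyOpNormedRing Matrix.linftyOpNormedAlgebra matCompl

theorem aux_main {m : ℕ} (𝒜 ℬ 𝒞 : Matrix (Fin m) (Fin m) ℂ)
    (hρ : specRad 𝒜 * specRad ℬ < 1) :
    (∃! 𝒳 : Matrix (Fin m) (Fin m) ℂ, 𝒳 = 𝒜 * 𝒳 * ℬ + 𝒞) ∧
      ∀ 𝒳 : Matrix (Fin m) (Fin m) ℂ, 𝒳 = 𝒜 * 𝒳 * ℬ + 𝒞 →
        HasSum (fun j : ℕ => 𝒜 ^ j * 𝒞 * ℬ ^ j) 𝒳 := by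
  have hsA := specRad_nonneg 𝒜
  have hsB := specRad_nonneg ℬ
  set δ : ℝ := (1 - specRad 𝒜 * specRad ℬ) / (specRad 𝒜 + specRad ℬ + 2) with hδdef
  have hδ : 0 < δ := div_pos (by linarith) (by linarith)
  have hkey : δ * (specRad 𝒜 + specRad ℬ + 2) = 1 - specRad 𝒜 * specRad ℬ :=
    div_mul_cancel₀ _ (by linarith)
  set rA := specRad 𝒜 + δ with hrAdef
  set rB := specRad ℬ + δ with hrBdef
  have hrA : 0 < rA := by simp only [hrAdef]; linarith
  have hrB : 0 < rB := by simp only [hrBdef]; linarith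
  have hδhalf : δ ≤ 1 / 2 := by
    rw [hδdef, div_le_iff₀ (by linarith)]
    nlinarith [mul_nonneg hsA hsB]
  have hδsq : δ * δ ≤ (1 / 2) * δ := mul_le_mul_of_nonneg_right hδhalf hδ.le
  have hrr : rA * rB < 1 := by
    simp only [hrAdef, hrBdef]
    nlinarith [hkey, hδsq, hδ]
  have hA : ∀ᶠ n : ℕ in Filter.atTop, ‖𝒜 ^ n‖ ≤ rA ^ n :=
    ev_norm_pow_le 𝒜 (lt_of_le_of_lt (specRad_bound 𝒜)
      ((ENNReal.ofReal_lt_ofReal_iff hrA).mpr (by simp only [hrAdef]; linarith)))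
  have hB : ∀ᶠ n : ℕ in Filter.atTop, ‖ℬ ^ n‖ ≤ rB ^ n :=
    ev_norm_pow_le ℬ (lt_of_le_of_lt (specRad_bound ℬ)
      ((ENNReal.ofReal_lt_ofReal_iff hrB).mpr (by simp only [hrBdef]; linarith)))
  set f : ℕ → Matrix (Fin m) (Fin m) ℂ := fun j => 𝒜 ^ j * 𝒞 * ℬ ^ j with hfdef
  have hprod : ∀ (Y : Matrix (Fin m) (Fin m) ℂ) (n : ℕ), ‖𝒜 ^ n‖ ≤ rA ^ n → ‖ℬ ^ n‖ ≤ rB ^ n →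
      ‖𝒜 ^ n * Y * ℬ ^ n‖ ≤ ‖Y‖ * (rA * rB) ^ n := by
    intro Y n h1 h2
    calc ‖𝒜 ^ n * Y * ℬ ^ n‖ ≤ ‖𝒜 ^ n * Y‖ * ‖ℬ ^ n‖ := norm_mul_le _ _
      _ ≤ ‖𝒜 ^ n‖ * ‖Y‖ * ‖ℬ ^ n‖ :=
        mul_le_mul_of_nonneg_right (norm_mul_le _ _) (norm_nonneg _)
      _ ≤ rA ^ n * ‖Y‖ * rB ^ n := by
        have h3 : ‖𝒜 ^ n‖ * ‖Y‖ ≤ rA ^ n * ‖Y‖ :=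
          mul_le_mul_of_nonneg_right h1 (norm_nonneg _)
        calc ‖𝒜 ^ n‖ * ‖Y‖ * ‖ℬ ^ n‖ ≤ rA ^ n * ‖Y‖ * ‖ℬ ^ n‖ :=
              mul_le_mul_of_nonneg_right h3 (norm_nonneg _)
          _ ≤ rA ^ n * ‖Y‖ * rB ^ n :=
              mul_le_mul_of_nonneg_left h2 (by positivity)
      _ = ‖Y‖ * (rA * rB) ^ n := by rw [mul_pow]; ring
  have hfb : ∀ᶠ n : ℕ in Filter.atTop, ‖f n‖ ≤ ‖𝒞‖ * (rA * rB) ^ n := by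
    filter_upwards [hA, hB] with n h1 h2
    exact hprod 𝒞 n h1 h2
  have hsummable : Summable f :=
    Summable.of_norm_bounded_eventually_nat
      ((summable_geometric_of_lt_one (mul_nonneg hrA.le hrB.le) hrr).mul_left ‖𝒞‖) hfb
  have hX : HasSum f (∑' j, f j) := hsummable.hasSum
  have hpart : ∀ 𝒳 : Matrix (Fin m) (Fin m) ℂ, 𝒳 = 𝒜 * 𝒳 * ℬ + 𝒞 → HasSum f 𝒳 := by
    intro 𝒳 h𝒳
    have key : ∀ n : ℕ, 𝒜 ^ n * 𝒳 * ℬ ^ n = 𝒜 ^ (n + 1) * 𝒳 * ℬ ^ (n + 1) + f n := by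
      intro n
      calc 𝒜 ^ n * 𝒳 * ℬ ^ n = 𝒜 ^ n * (𝒜 * 𝒳 * ℬ + 𝒞) * ℬ ^ n := by rw [← h𝒳]
        _ = 𝒜 ^ (n + 1) * 𝒳 * ℬ ^ (n + 1) + f n := by
          simp only [hfdef, pow_succ 𝒜 n, pow_succ' ℬ n, mul_add, add_mul, mul_assoc]
    have hpartial : ∀ n : ℕ, ∑ j ∈ Finset.range n, f j = 𝒳 - 𝒜 ^ n * 𝒳 * ℬ ^ n := by
      intro n
      induction n with
      | zero => simp
      | succ n ih => rw [Finset.sum_range_succ, ih, key n]; abel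
    have htz : Filter.Tendsto (fun n : ℕ => 𝒜 ^ n * 𝒳 * ℬ ^ n) Filter.atTop (nhds 0) := by
      refine squeeze_zero_norm' ?_ (by
        simpa using
          ((tendsto_pow_atTop_nhds_zero_of_lt_one (mul_nonneg hrA.le hrB.le) hrr).const_mul ‖𝒳‖))
      filter_upwards [hA, hB] with n h1 h2
      exact hprod 𝒳 n h1 h2
    have hps : Filter.Tendsto (fun n : ℕ => ∑ j ∈ Finset.range n, f j) Filter.atTop (nhds 𝒳) := by
      simp only [hpartial]
      simpa using Filter.Tendsto.sub (tendsto_const_nhds (x := 𝒳)) htz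
    have heq : ∑' j, f j = 𝒳 := tendsto_nhds_unique hX.tendsto_sum_nat hps
    rwa [heq] at hX
  refine ⟨?_, hpart⟩
  have h2 : HasSum (fun j => 𝒜 * f j * ℬ) (𝒜 * (∑' j, f j) * ℬ) := (hX.mul_left 𝒜).mul_right ℬ
  have h2' : HasSum (fun j => f (j + 1)) (𝒜 * (∑' j, f j) * ℬ) := by
    have hfe : (fun j => f (j + 1)) = fun j => 𝒜 * f j * ℬ := by
      funext j
      simp only [hfdef, pow_succ' 𝒜 j, pow_succ ℬ j, mul_assoc]
    rw [hfe]; exact h2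
  have h3 : HasSum (fun j => f (j + 1)) ((∑' j, f j) - ∑ i ∈ Finset.range 1, f i) :=
    (hasSum_nat_add_iff' 1).mpr hX
  have h4 : 𝒜 * (∑' j, f j) * ℬ = (∑' j, f j) - 𝒞 := by
    have h5 := h2'.unique h3
    simpa [hfdef] using h5
  have hsol : (∑' j, f j) = 𝒜 * (∑' j, f j) * ℬ + 𝒞 := by rw [h4]; exact (sub_add_cancel _ _).symm
  exact ⟨∑' j, f j, hsol, fun Y hY => (hpart Y hY).unique hX⟩

end Main

theorem stmt_12 {m : ℕ} (𝒜 ℬ 𝒞 : Matrix (Fin m) (Fin m) ℂ)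
    (hρ : specRad 𝒜 * specRad ℬ < 1) :
    (∃! 𝒳 : Matrix (Fin m) (Fin m) ℂ, 𝒳 = 𝒜 * 𝒳 * ℬ + 𝒞) ∧
      ∀ 𝒳 : Matrix (Fin m) (Fin m) ℂ, 𝒳 = 𝒜 * 𝒳 * ℬ + 𝒞 →
        HasSum (fun j : ℕ => 𝒜 ^ j * 𝒞 * ℬ ^ j) 𝒳 := by
  exact aux_main 𝒜 ℬ 𝒞 hρ
end

section
/- Let 𝒜, ℬ, 𝒞 be m×m complex matrices, X the solution of the Stein equation X = 𝒜·X·ℬ + 𝒞, and r ≥ 2 an integer. Then for every k ≥ 0, X = 𝒜^{r^k}·X·ℬ^{r^k} + Σ 𝒜^{i₁+r·i₂+⋯+r^{k-1}·i_k}·𝒞·ℬ^{i₁+r·i₂+⋯+r^{k-1}·i_k}, where the sum runs over all tuples (i₁,…,i_k) with 0 ≤ i_j ≤ r−1. -/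
open Finset

lemma stein_aux {m : ℕ} (𝒜 ℬ 𝒞 X : Matrix (Fin m) (Fin m) ℂ)
    (hX : X = 𝒜 * X * ℬ + 𝒞) (n : ℕ) :
    X = 𝒜 ^ n * X * ℬ ^ n + ∑ i ∈ range n, 𝒜 ^ i * 𝒞 * ℬ ^ i := by
  induction n with
  | zero => simp
  | succ n ih =>
    calc X = 𝒜 ^ n * X * ℬ ^ n + ∑ i ∈ range n, 𝒜 ^ i * 𝒞 * ℬ ^ i := ih
      _ = 𝒜 ^ n * (𝒜 * X * ℬ + 𝒞) * ℬ ^ n + ∑ i ∈ range n, 𝒜 ^ i * 𝒞 * ℬ ^ i := by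
          rw [← hX]
      _ = 𝒜 ^ (n + 1) * X * ℬ ^ (n + 1) + ∑ i ∈ range (n + 1), 𝒜 ^ i * 𝒞 * ℬ ^ i := by
          rw [Finset.sum_range_succ, pow_succ 𝒜, pow_succ' ℬ]
          noncomm_ring

theorem stmt_14 {m : ℕ} (𝒜 ℬ 𝒞 X : Matrix (Fin m) (Fin m) ℂ)
    (hX : X = 𝒜 * X * ℬ + 𝒞) (r : ℕ) (hr : 2 ≤ r) (k : ℕ) :
    X = 𝒜 ^ (r ^ k) * X * ℬ ^ (r ^ k) +
      ∑ t : Fin k → Fin r,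
        𝒜 ^ (∑ j : Fin k, r ^ (j : ℕ) * (t j : ℕ)) * 𝒞 *
          ℬ ^ (∑ j : Fin k, r ^ (j : ℕ) * (t j : ℕ)) := by
  have h := stein_aux 𝒜 ℬ 𝒞 X hX (r ^ k)
  conv_lhs => rw [h]
  congr 1
  rw [← Fin.sum_univ_eq_sum_range (fun i => 𝒜 ^ i * 𝒞 * ℬ ^ i) (r ^ k)]
  refine (Fintype.sum_equiv finFunctionFinEquiv
    (fun t : Fin k → Fin r => 𝒜 ^ (∑ j : Fin k, r ^ (j : ℕ) * (t j : ℕ)) * 𝒞 *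
      ℬ ^ (∑ j : Fin k, r ^ (j : ℕ) * (t j : ℕ)))
    (fun i : Fin (r ^ k) => 𝒜 ^ (i : ℕ) * 𝒞 * ℬ ^ (i : ℕ)) fun t => ?_).symm
  simp only [finFunctionFinEquiv_apply t]
  rw [Finset.sum_congr rfl fun (j : Fin k) _ => mul_comm ((t j : ℕ)) (r ^ (j : ℕ))]
end

section
/- Let P be the m×m cyclic permutation matrix with Pᵐ = I. If 𝒳 satisfies the Stein equation 𝒳 = (A·Pᵀ)ᵐ·𝒳·(P·B)ᵐ + Σ_{i=0}^{m-1} (A·Pᵀ)ⁱ·C·(P·B)ⁱ, then X := (1/m)·Σ_{i=0}^{m-1} (A·Pᵀ)ⁱ·(𝒳 + (m−i−1)·C)·(P·B)ⁱ satisfies X = A·Pᵀ·X·P·B + C. -/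
open Finset

/-- The primary (cyclic) permutation matrix: `P i j = 1` iff `j = i + 1 (mod m)`. -/
noncomputable def Pmat (m : ℕ) [NeZero m] : Matrix (Fin m) (Fin m) ℂ :=
  Matrix.of fun i j => if j = i + 1 then 1 else 0

theorem stmt_16 {m : ℕ} [NeZero m] (A B C 𝒳 : Matrix (Fin m) (Fin m) ℂ)
    (h𝒳 : 𝒳 = (A * (Pmat m).transpose) ^ m * 𝒳 * (Pmat m * B) ^ m +
      ∑ i ∈ range m, (A * (Pmat m).transpose) ^ i * C * (Pmat m * B) ^ i) :
    ((m : ℂ)⁻¹ • ∑ i ∈ range m,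
        (A * (Pmat m).transpose) ^ i * (𝒳 + ((m - i - 1 : ℕ) : ℂ) • C) * (Pmat m * B) ^ i) =
      A * (Pmat m).transpose *
        ((m : ℂ)⁻¹ • ∑ i ∈ range m,
          (A * (Pmat m).transpose) ^ i * (𝒳 + ((m - i - 1 : ℕ) : ℂ) • C) * (Pmat m * B) ^ i) *
        Pmat m * B + C := by
  obtain ⟨n, rfl⟩ : ∃ n, m = n + 1 :=
    ⟨m - 1, (Nat.succ_pred_eq_of_pos (Nat.pos_of_ne_zero (NeZero.ne m))).symm⟩
  set L := A * (Pmat (n+1)).transpose with hL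
  set R := Pmat (n+1) * B with hR
  set S := ∑ i ∈ range (n+1), L ^ i * (𝒳 + ((n+1-i-1 : ℕ) : ℂ) • C) * R ^ i with hS
  have hm : ((n+1 : ℕ) : ℂ) ≠ 0 := Nat.cast_ne_zero.mpr (Nat.succ_ne_zero n)
  have key : S = L * S * R + ((n+1 : ℕ) : ℂ) • C := by
    have hLSR : L * S * R = ∑ i ∈ range (n+1),
        L ^ (i+1) * (𝒳 + ((n+1-i-1 : ℕ) : ℂ) • C) * R ^ (i+1) := by
      rw [hS, Finset.mul_sum, Finset.sum_mul]
      refine Finset.sum_congr rfl fun i _ => ?_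
      rw [pow_succ' L, pow_succ R]
      simp [mul_assoc]
    have hsplit : ∀ i ∈ range n,
        L ^ (i+1) * (𝒳 + ((n+1-i-1 : ℕ) : ℂ) • C) * R ^ (i+1) =
        L ^ (i+1) * (𝒳 + ((n+1-(i+1)-1 : ℕ) : ℂ) • C) * R ^ (i+1)
          + L ^ (i+1) * C * R ^ (i+1) := by
      intro i hi
      have hi' : i < n := Finset.mem_range.mp hi
      have h1 : (n+1-i-1 : ℕ) = (n+1-(i+1)-1) + 1 := by omega
      rw [h1, Nat.cast_add, Nat.cast_one, add_smul, one_smul, ← add_assoc, mul_add, add_mul]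
    have e2 : L * S * R =
        ((∑ i ∈ range n, L ^ (i+1) * (𝒳 + ((n+1-(i+1)-1 : ℕ) : ℂ) • C) * R ^ (i+1))
          + ∑ i ∈ range n, L ^ (i+1) * C * R ^ (i+1))
          + L ^ (n+1) * 𝒳 * R ^ (n+1) := by
      rw [hLSR, Finset.sum_range_succ, Finset.sum_congr rfl hsplit, Finset.sum_add_distrib]
      have h0 : (n+1-n-1 : ℕ) = 0 := by omega
      rw [h0]
      simp
    have e1 : S = (∑ i ∈ range n, L ^ (i+1) * (𝒳 + ((n+1-(i+1)-1 : ℕ) : ℂ) • C) * R ^ (i+1))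
        + (𝒳 + ((n : ℕ) : ℂ) • C) := by
      rw [hS, Finset.sum_range_succ']
      simp
    have e3 : 𝒳 - L ^ (n+1) * 𝒳 * R ^ (n+1)
        = C + ∑ i ∈ range n, L ^ (i+1) * C * R ^ (i+1) := by
      nth_rewrite 1 [h𝒳]
      rw [Finset.sum_range_succ']
      simp only [pow_zero, one_mul, mul_one]
      abel
    rw [e2, e1]
    generalize hF : (∑ i ∈ range n, L ^ (i+1) * C * R ^ (i+1)) = F at e3 ⊢
    generalize hZ : L ^ (n+1) * 𝒳 * R ^ (n+1) = Z at e3 ⊢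
    generalize hT : (∑ i ∈ range n,
      L ^ (i+1) * (𝒳 + ((n+1-(i+1)-1 : ℕ) : ℂ) • C) * R ^ (i+1)) = T
    have h𝒳' : 𝒳 = C + F + Z := sub_eq_iff_eq_add.mp e3
    rw [h𝒳']
    push_cast
    rw [add_smul, one_smul]
    abel
  have hrhs : L * (((n+1 : ℕ) : ℂ)⁻¹ • S) * Pmat (n+1) * B
      = ((n+1 : ℕ) : ℂ)⁻¹ • (L * S * R) := by
    rw [mul_smul_comm, smul_mul_assoc, smul_mul_assoc, hR, mul_assoc (L * S)]
  rw [hrhs]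
  conv_lhs => rw [key]
  rw [smul_add, smul_smul, inv_mul_cancel₀ hm, one_smul]
end
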